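/- (Theorem 4) Let N ≥ 2, let A = (a_{ij}) be an irreducible N×N matrix satisfying Condition A2, suppose f : ℝ^n × ℝ⁺ → ℝ^n is continuous and belongs to QUAD(Δ,ϖ) with ϖ > 0, and let g_1,…,g_n : ℝ → ℝ satisfy (g_k(u) − g_k(v))/(u − v) ≥ β for all u ≠ v and k = 1,…,n, where β > 0. Write g(x) = (g_1(x^1),…,g_n(x^n))^T for x = (x^1,…,x^n)^T ∈ ℝ^n. Let α > 0 and let x_1,…,x_N : [0,∞) → ℝ^n and c : [0,∞) → ℝ be differentiable functions satisfying, for all t ≥ 0, ẋ_i(t) = f(x_i(t),t) + c(t) Σ_{j≠i} a_{ij} (g(x_j(t)) − g(x_i(t))), ċ(t) = −(α/2) Σ_{i,j} a_{ij} x_i(t)^T g(x_j(t)), and c(0) = 0. Then ‖x_i(t) − x_j(t)‖ → 0 as t → ∞ for all i, j, and c(t) converges to a finite limit. -/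

import Mathlib

open Matrix Filter

section Aux
open Finset

private lemma lagrange_id' (N : ℕ) (a b : Fin N → ℝ) :
    ∑ i, ∑ j, (a i - a j) * (b i - b j)
      = 2 * N * ∑ i, a i * b i - 2 * (∑ i, a i) * (∑ i, b i) := by
  have h : ∀ i j : Fin N, (a i - a j) * (b i - b j)
      = a i * b i - a i * b j - a j * b i + a j * b j := fun i j => by ring
  simp only [h, Finset.sum_add_distrib, Finset.sum_sub_distrib, Finset.sum_const,
    Finset.card_univ, Fintype.card_fin, ← Finset.sum_mul, ← Finset.mul_sum,
    nsmul_eq_mul]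
  ring

private lemma slope_bound' (β : ℝ) (g : ℝ → ℝ)
    (hg : ∀ u v : ℝ, u ≠ v → β ≤ (g u - g v) / (u - v))
    (u v : ℝ) : β * (u - v) ^ 2 ≤ (u - v) * (g u - g v) := by
  rcases eq_or_ne u v with h | h
  · simp [h]
  · have h2 : u - v ≠ 0 := sub_ne_zero.mpr h
    have := mul_le_mul_of_nonneg_right (hg u v h) (sq_nonneg (u - v))
    have h3 : (g u - g v) / (u - v) * (u - v) ^ 2 = (u - v) * (g u - g v) := by
      field_simp
    linarith [h3 ▸ this]

private lemma conn_bound' (N : ℕ) (A : Matrix (Fin N) (Fin N) ℝ)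
    (hoff : ∀ i j, i ≠ j → 0 ≤ A i j)
    (hirr : ∀ S : Finset (Fin N), S.Nonempty → S ≠ Finset.univ →
      ∃ i ∈ S, ∃ j, j ∉ S ∧ A i j ≠ 0) :
    ∃ C > 0, ∀ u : Fin N → ℝ,
      (∑ i, ∑ j, (u i - u j) ^ 2) ≤ C * ∑ i, ∑ j, A i j * (u i - u j) ^ 2 := by
  classical
  set E : Fin N → Fin N → Prop := fun p q => p ≠ q ∧ A p q ≠ 0 with hE
  set R : (Fin N → ℝ) → ℝ := fun u => ∑ i, ∑ j, A i j * (u i - u j) ^ 2 with hR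
  have htermnn : ∀ (u : Fin N → ℝ) (i j : Fin N), 0 ≤ A i j * (u i - u j) ^ 2 := by
    intro u i j
    rcases eq_or_ne i j with h | h
    · simp [h]
    · exact mul_nonneg (hoff i j h) (sq_nonneg _)
  have hRnn : ∀ u, 0 ≤ R u := fun u =>
    Finset.sum_nonneg fun i _ => Finset.sum_nonneg fun j _ => htermnn u i j
  have hedge : ∀ p q : Fin N, E p q → ∀ u, A p q * (u p - u q) ^ 2 ≤ R u := by
    intro p q _ u
    calc A p q * (u p - u q) ^ 2 ≤ ∑ j, A p j * (u p - u j) ^ 2 :=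
          Finset.single_le_sum (fun j _ => htermnn u p j) (Finset.mem_univ q)
      _ ≤ R u := Finset.single_le_sum
          (fun i _ => Finset.sum_nonneg fun j _ => htermnn u i j) (Finset.mem_univ p)
  have reach : ∀ i j : Fin N, Relation.ReflTransGen E i j := by
    intro i j
    set S : Finset (Fin N) := Finset.univ.filter (fun q => Relation.ReflTransGen E i q) with hS
    have hiS : i ∈ S := by simp [hS, Relation.ReflTransGen.refl]
    by_cases hSu : S = Finset.univ
    · have : j ∈ S := hSu ▸ Finset.mem_univ j
      simpa [hS] using this
    · obtain ⟨p, hpS, q, hqS, hApq⟩ := hirr S ⟨i, hiS⟩ hSu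
      have hpq : p ≠ q := fun h => hqS (h ▸ hpS)
      have hp : Relation.ReflTransGen E i p := by simpa [hS] using hpS
      have : q ∈ S := by simp [hS]; exact hp.tail ⟨hpq, hApq⟩
      exact absurd this hqS
  have key : ∀ i j : Fin N, Relation.ReflTransGen E i j →
      ∃ C, 0 ≤ C ∧ ∀ u : Fin N → ℝ, (u i - u j) ^ 2 ≤ C * R u := by
    intro i j h
    induction h with
    | refl => exact ⟨0, le_refl _, fun u => by simp⟩
    | @tail p q hp hpq ih =>
      obtain ⟨C, hC, hCu⟩ := ih
      have hApq : 0 < A p q := lt_of_le_of_ne (hoff p q hpq.1) (Ne.symm hpq.2)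
      refine ⟨2 * C + 2 / A p q, add_nonneg (by linarith) (le_of_lt (by positivity)),
        fun u => ?_⟩
      have h1 : (u p - u q) ^ 2 ≤ (1 / A p q) * R u := by
        rw [div_mul_eq_mul_div, one_mul, le_div_iff₀ hApq, mul_comm]
        exact hedge p q hpq u
      have h2 : (u i - u q) ^ 2 ≤ 2 * (u i - u p) ^ 2 + 2 * (u p - u q) ^ 2 := by
        nlinarith [sq_nonneg (u i - u p - (u p - u q))]
      calc (u i - u q) ^ 2 ≤ 2 * (u i - u p) ^ 2 + 2 * (u p - u q) ^ 2 := h2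
        _ ≤ 2 * (C * R u) + 2 * ((1 / A p q) * R u) := by
            have := hCu u
            nlinarith
        _ = (2 * C + 2 / A p q) * R u := by ring
  choose CC hCC0 hCCle using fun i j => key i j (reach i j)
  have hCCsum : 0 ≤ ∑ i, ∑ j, CC i j :=
    Finset.sum_nonneg fun i _ => Finset.sum_nonneg fun j _ => hCC0 i j
  refine ⟨1 + ∑ i, ∑ j, CC i j, by linarith, fun u => ?_⟩
  calc (∑ i, ∑ j, (u i - u j) ^ 2) ≤ ∑ i, ∑ j, CC i j * R u :=
        Finset.sum_le_sum fun i _ => Finset.sum_le_sum fun j _ => hCCle i j u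
    _ = (∑ i, ∑ j, CC i j) * R u := by simp [Finset.sum_mul]
    _ ≤ (1 + ∑ i, ∑ j, CC i j) * R u := by
        have := hRnn u; nlinarith

private lemma alg_T' (N : ℕ) (A : Matrix (Fin N) (Fin N) ℝ)
    (hsym : ∀ i j, A i j = A j i) (hrow : ∀ i, ∑ j, A i j = 0)
    (p : Fin N → Fin N → ℝ) :
    ∑ i, ∑ j, A i j * (p i i - p i j - p j i + p j j)
      = -2 * ∑ i, ∑ j, A i j * p i j := by
  have e1 : ∑ i, ∑ j, A i j * p i i = 0 := by
    refine Finset.sum_eq_zero fun i _ => ?_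
    rw [← Finset.sum_mul, hrow, zero_mul]
  have e4 : ∑ i, ∑ j, A i j * p j j = 0 := by
    rw [Finset.sum_comm]
    refine Finset.sum_eq_zero fun j _ => ?_
    have : ∑ i, A i j = 0 := by
      rw [Finset.sum_congr rfl fun i _ => hsym i j, hrow]
    rw [← Finset.sum_mul, this, zero_mul]
  have e3 : ∑ i, ∑ j, A i j * p j i = ∑ i, ∑ j, A i j * p i j := by
    rw [Finset.sum_comm]
    exact Finset.sum_congr rfl fun i _ => Finset.sum_congr rfl fun j _ => by rw [hsym]
  have expand : ∀ i j : Fin N, A i j * (p i i - p i j - p j i + p j j)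
      = A i j * p i i - A i j * p i j - A i j * p j i + A i j * p j j :=
    fun i j => by ring
  simp only [expand, Finset.sum_add_distrib, Finset.sum_sub_distrib, e1, e4, e3]
  ring

private lemma alg_sum' (N n : ℕ) (A : Matrix (Fin N) (Fin N) ℝ)
    (hsym : ∀ i j, A i j = A j i) (hrow : ∀ i, ∑ j, A i j = 0)
    (X G : Fin N → Fin n → ℝ) :
    ∑ i, ∑ j, ∑ k, (X i k - X j k) *
        ((∑ m, A i m * (G m k - G i k)) - (∑ m, A j m * (G m k - G j k)))
      = 2 * N * ∑ i, ∑ j, A i j * ∑ k, X i k * G j k := by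
  set P : Fin N → Fin n → ℝ := fun i k => ∑ m, A i m * (G m k - G i k) with hP
  have f1 : ∀ k, ∑ i, P i k = 0 := by
    intro k
    have split : ∀ i : Fin N, P i k = (∑ m, A i m * G m k) - (∑ m, A i m) * G i k := by
      intro i
      simp only [hP, mul_sub, Finset.sum_sub_distrib, Finset.sum_mul]
    simp only [split, hrow, zero_mul, sub_zero]
    rw [Finset.sum_comm]
    refine Finset.sum_eq_zero fun m _ => ?_
    rw [← Finset.sum_mul, Finset.sum_congr rfl fun i _ => hsym i m, hrow, zero_mul]
  have f2 : ∑ i, ∑ k, X i k * P i k = ∑ i, ∑ j, A i j * ∑ k, X i k * G j k := by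
    refine Finset.sum_congr rfl fun i _ => ?_
    have : ∀ k, X i k * P i k
        = (∑ m, A i m * (X i k * G m k)) - (∑ m, A i m) * (X i k * G i k) := by
      intro k
      simp only [hP, Finset.mul_sum, Finset.sum_mul, ← Finset.sum_sub_distrib]
      exact Finset.sum_congr rfl fun m _ => by ring
    simp only [this, hrow, zero_mul, sub_zero]
    rw [Finset.sum_comm]
    exact Finset.sum_congr rfl fun m _ => by rw [Finset.mul_sum]
  calc ∑ i, ∑ j, ∑ k, (X i k - X j k) * (P i k - P j k)
      = ∑ k, ∑ i, ∑ j, (X i k - X j k) * (P i k - P j k) := by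
        rw [show (∑ i, ∑ j, ∑ k, (X i k - X j k) * (P i k - P j k))
            = ∑ i, ∑ k : Fin n, ∑ j, (X i k - X j k) * (P i k - P j k) from
          Finset.sum_congr rfl fun i _ => Finset.sum_comm, Finset.sum_comm]
    _ = ∑ k, (2 * N * ∑ i, X i k * P i k - 2 * (∑ i, X i k) * (∑ i, P i k)) :=
        Finset.sum_congr rfl fun k _ => lagrange_id' N (fun i => X i k) (fun i => P i k)
    _ = ∑ k, 2 * N * ∑ i, X i k * P i k := by
        refine Finset.sum_congr rfl fun k _ => ?_
        rw [f1, mul_zero, sub_zero]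
    _ = 2 * N * ∑ i, ∑ k, X i k * P i k := by
        rw [← Finset.mul_sum, Finset.sum_comm]
    _ = 2 * N * ∑ i, ∑ j, A i j * ∑ k, X i k * G j k := by rw [f2]

end Aux

set_option maxHeartbeats 1600000 in
/-- Theorem 4: nonlinearly coupled systems. A is an irreducible matrix
satisfying Condition A2, f ∈ QUAD(Δ,ϖ), and g acts componentwise via functions
g_k with slope (g_k(u) − g_k(v))/(u − v) ≥ β > 0 for u ≠ v. With the adaptive scheme
ẋᵢ = f(xᵢ,t) + c(t) Σ_{j≠i} a_{ij} (g(xⱼ) − g(xᵢ)),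
ċ = −(α/2) Σᵢⱼ a_{ij} xᵢᵀ g(xⱼ), c(0) = 0,
then ‖xᵢ(t) − xⱼ(t)‖ → 0 for all i,j and c(t) converges to a finite limit. -/
theorem stmt17 (N n : ℕ) (hN : 2 ≤ N) (A : Matrix (Fin N) (Fin N) ℝ)
    (hsym : ∀ i j, A i j = A j i)
    (hoff : ∀ i j, i ≠ j → 0 ≤ A i j)
    (hdiag : ∀ i, A i i = -∑ j ∈ Finset.univ.erase i, A i j)
    (hirr : ∀ S : Finset (Fin N), S.Nonempty → S ≠ Finset.univ →
      ∃ i ∈ S, ∃ j, j ∉ S ∧ A i j ≠ 0)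
    (δ : Fin n → ℝ) (ϖ : ℝ) (hϖ : 0 < ϖ)
    (f : (Fin n → ℝ) → ℝ → (Fin n → ℝ))
    (hf : Continuous fun p : (Fin n → ℝ) × ℝ => f p.1 p.2)
    (hQUAD : ∀ x y : Fin n → ℝ, ∀ t : ℝ, 0 ≤ t →
      (∑ k, (x k - y k) * (f x t k - f y t k)) - (∑ k, δ k * (x k - y k) ^ 2)
        ≤ -ϖ * ∑ k, (x k - y k) ^ 2)
    (β : ℝ) (hβ : 0 < β) (g : Fin n → ℝ → ℝ)
    (hg : ∀ k : Fin n, ∀ u v : ℝ, u ≠ v → β ≤ (g k u - g k v) / (u - v))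
    (α : ℝ) (hα : 0 < α)
    (x : Fin N → ℝ → (Fin n → ℝ)) (c : ℝ → ℝ) (hc0 : c 0 = 0)
    (hODE : ∀ i, ∀ t : ℝ, 0 ≤ t →
      HasDerivAt (x i)
        (fun k => f (x i t) t k
          + c t * ∑ j ∈ Finset.univ.erase i, A i j * (g k (x j t k) - g k (x i t k))) t)
    (hcODE : ∀ t : ℝ, 0 ≤ t →
      HasDerivAt c (-(α / 2) * ∑ i, ∑ j, A i j * ∑ k, x i t k * g k (x j t k)) t) :
    (∀ i j, Tendsto (fun t => ‖x i t - x j t‖) atTop (nhds 0)) ∧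
    ∃ c₀ : ℝ, Tendsto c atTop (nhds c₀) := by
  classical
  -- basic facts
  have hNpos : (0:ℝ) < (N:ℝ) := by exact_mod_cast Nat.lt_of_lt_of_le (by norm_num) hN
  have hrow : ∀ i, ∑ j, A i j = 0 := by
    intro i
    have h := Finset.add_sum_erase Finset.univ (A i) (Finset.mem_univ i)
    rw [← h, hdiag i]
    ring
  obtain ⟨C, hC, hCle⟩ := conn_bound' N A hoff hirr
  obtain ⟨M, hM1, hMk⟩ : ∃ M : ℝ, 1 ≤ M ∧ ∀ k, δ k ≤ M := by
    refine ⟨1 + ∑ k, |δ k|, ?_, ?_⟩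
    · have : 0 ≤ ∑ k, |δ k| := Finset.sum_nonneg fun k _ => abs_nonneg _
      linarith
    · intro k
      have h1 : |δ k| ≤ ∑ k, |δ k| :=
        Finset.single_le_sum (fun k _ => abs_nonneg (δ k)) (Finset.mem_univ k)
      have := le_abs_self (δ k)
      linarith
  obtain ⟨cstar, hcstar, hcs⟩ : ∃ cs : ℝ, 0 < cs ∧ (N:ℝ) * cs * β = C * M := by
    refine ⟨C * M / ((N:ℝ) * β), div_pos (mul_pos hC (by linarith)) (mul_pos hNpos hβ), ?_⟩
    field_simp
  obtain ⟨K, hK, hKα⟩ : ∃ K : ℝ, 0 < K ∧ K * α = 4 * (N:ℝ) := by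
    refine ⟨4 * (N:ℝ) / α, by positivity, by field_simp⟩
  -- names
  set Q : ℝ → ℝ := fun t => ∑ i, ∑ j, ∑ k, (x i t k - x j t k) ^ 2 with hQ_def
  set T : ℝ → ℝ := fun t => ∑ i, ∑ j, A i j * ∑ k, x i t k * g k (x j t k) with hT_def
  set R : ℝ → ℝ := fun t => ∑ i, ∑ j, A i j * ∑ k, (x i t k - x j t k) ^ 2 with hR_def
  set V : ℝ → ℝ := fun t => Q t + K * (c t - cstar) ^ 2 with hV_def
  clear_value Q T R
  have hQnn : ∀ t, 0 ≤ Q t := by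
    intro t
    rw [hQ_def]
    exact Finset.sum_nonneg fun i _ => Finset.sum_nonneg fun j _ =>
      Finset.sum_nonneg fun k _ => sq_nonneg _
  have hRnn : ∀ t, 0 ≤ R t := by
    intro t
    rw [hR_def]
    refine Finset.sum_nonneg fun i _ => Finset.sum_nonneg fun j _ => ?_
    rcases eq_or_ne i j with h | h
    · simp [h]
    · exact mul_nonneg (hoff i j h) (Finset.sum_nonneg fun k _ => sq_nonneg _)
  have hVnn : ∀ t, 0 ≤ V t := fun t => by
    rw [hV_def]
    exact add_nonneg (hQnn t) (mul_nonneg hK.le (sq_nonneg _))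
  -- componentwise derivatives
  have hxd : ∀ (i : Fin N) (t : ℝ), 0 ≤ t → ∀ k, HasDerivAt (fun s => x i s k)
      (f (x i t) t k + c t * ∑ m, A i m * (g k (x m t k) - g k (x i t k))) t := by
    intro i t ht k
    have h := (hasDerivAt_pi.mp (hODE i t ht)) k
    have he : ∑ m ∈ Finset.univ.erase i, A i m * (g k (x m t k) - g k (x i t k))
        = ∑ m, A i m * (g k (x m t k) - g k (x i t k)) :=
      Finset.sum_erase Finset.univ (by simp)
    simpa [he] using h
  -- derivative of Q
  set Qd : ℝ → ℝ := fun t => ∑ i, ∑ j, ∑ k, 2 * (x i t k - x j t k) *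
      ((f (x i t) t k + c t * ∑ m, A i m * (g k (x m t k) - g k (x i t k)))
        - (f (x j t) t k + c t * ∑ m, A j m * (g k (x m t k) - g k (x j t k)))) with hQd_def
  clear_value Qd
  have hQd : ∀ t : ℝ, 0 ≤ t → HasDerivAt Q (Qd t) t := by
    intro t ht
    rw [hQ_def, hQd_def]
    apply HasDerivAt.fun_sum; intro i _
    apply HasDerivAt.fun_sum; intro j _
    apply HasDerivAt.fun_sum; intro k _
    have h : HasDerivAt (fun s => (x i s k - x j s k) ^ 2) _ t :=
      ((hxd i t ht k).sub (hxd j t ht k)).pow 2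
    refine h.congr_deriv ?_
    push_cast [Pi.sub_apply]
    ring
  have hVd : ∀ t : ℝ, 0 ≤ t →
      HasDerivAt V (Qd t + K * (2 * (c t - cstar) * (-(α / 2) * T t))) t := by
    intro t ht
    rw [hV_def]
    apply (hQd t ht).add
    have h : HasDerivAt (fun s => K * (c s - cstar) ^ 2) _ t :=
      (((hcODE t ht).sub_const cstar).pow 2).const_mul K
    refine h.congr_deriv ?_
    push_cast
    simp only [hT_def]
    ring
  -- key pointwise estimate
  have hTle : ∀ t : ℝ, T t ≤ -(β / 2) * R t := by
    intro t
    set p : Fin N → Fin N → ℝ := fun i j => ∑ k, x i t k * g k (x j t k) with hp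
    have hid : ∀ i j : Fin N, ∑ k, (x i t k - x j t k) * (g k (x i t k) - g k (x j t k))
        = p i i - p i j - p j i + p j j := by
      intro i j
      simp only [hp, ← Finset.sum_sub_distrib, ← Finset.sum_add_distrib]
      exact Finset.sum_congr rfl fun k _ => by ring
    have halgT := alg_T' N A hsym hrow p
    have hterm : ∀ i j : Fin N,
        A i j * (β * ∑ k, (x i t k - x j t k) ^ 2)
          ≤ A i j * ∑ k, (x i t k - x j t k) * (g k (x i t k) - g k (x j t k)) := by
      intro i j
      rcases eq_or_ne i j with h | h
      · simp [h]
      · apply mul_le_mul_of_nonneg_left _ (hoff i j h)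
        rw [Finset.mul_sum]
        exact Finset.sum_le_sum fun k _ => slope_bound' β (g k) (hg k) _ _
    have hsum : β * R t ≤ -2 * T t := by
      have h1 : ∑ i, ∑ j, A i j * (β * ∑ k, (x i t k - x j t k) ^ 2)
          ≤ ∑ i, ∑ j, A i j * ∑ k, (x i t k - x j t k) * (g k (x i t k) - g k (x j t k)) :=
        Finset.sum_le_sum fun i _ => Finset.sum_le_sum fun j _ => hterm i j
      have h2 : ∑ i, ∑ j, A i j * (β * ∑ k, (x i t k - x j t k) ^ 2) = β * R t := by
        simp only [hR_def]
        rw [Finset.mul_sum]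
        refine Finset.sum_congr rfl fun i _ => ?_
        rw [Finset.mul_sum]
        exact Finset.sum_congr rfl fun j _ => by ring
      have h3 : ∑ i, ∑ j, A i j * ∑ k, (x i t k - x j t k) * (g k (x i t k) - g k (x j t k))
          = -2 * T t := by
        simp only [hT_def]
        rw [← halgT]
        exact Finset.sum_congr rfl fun i _ => Finset.sum_congr rfl fun j _ => by rw [hid]
      rw [h2, h3] at h1
      exact h1
    linarith
  have hQR : ∀ t, Q t ≤ C * R t := by
    intro t
    have hQswap : Q t = ∑ k, ∑ i, ∑ j, (x i t k - x j t k) ^ 2 := by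
      simp only [hQ_def]
      rw [show (∑ i, ∑ j, ∑ k, (x i t k - x j t k) ^ 2)
          = ∑ i, ∑ k : Fin n, ∑ j, (x i t k - x j t k) ^ 2 from
        Finset.sum_congr rfl fun i _ => Finset.sum_comm, Finset.sum_comm]
    have hRswap : R t = ∑ k, ∑ i, ∑ j, A i j * (x i t k - x j t k) ^ 2 := by
      simp only [hR_def]
      rw [show (∑ i, ∑ j, A i j * ∑ k, (x i t k - x j t k) ^ 2)
          = ∑ i, ∑ j, ∑ k, A i j * (x i t k - x j t k) ^ 2 from
        Finset.sum_congr rfl fun i _ => Finset.sum_congr rfl fun j _ => Finset.mul_sum _ _ _,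
        show (∑ i, ∑ j, ∑ k, A i j * (x i t k - x j t k) ^ 2)
          = ∑ i, ∑ k : Fin n, ∑ j, A i j * (x i t k - x j t k) ^ 2 from
        Finset.sum_congr rfl fun i _ => Finset.sum_comm, Finset.sum_comm]
    rw [hQswap, hRswap, Finset.mul_sum]
    exact Finset.sum_le_sum fun k _ => hCle (fun i => x i t k)
  have hVle : ∀ t : ℝ, 0 ≤ t →
      Qd t + K * (2 * (c t - cstar) * (-(α / 2) * T t)) ≤ -2 * ϖ * Q t := by
    intro t ht
    set Ft : ℝ := ∑ i, ∑ j, ∑ k, (x i t k - x j t k) * (f (x i t) t k - f (x j t) t k)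
      with hFt_def
    have hQdeq : Qd t = 2 * Ft + 4 * (N:ℝ) * c t * T t := by
      have hsplit : Qd t = 2 * Ft + 2 * c t *
          (∑ i, ∑ j, ∑ k, (x i t k - x j t k) *
            ((∑ m, A i m * (g k (x m t k) - g k (x i t k)))
              - (∑ m, A j m * (g k (x m t k) - g k (x j t k))))) := by
        simp only [hQd_def, hFt_def]
        rw [show (∑ i, ∑ j, ∑ k, 2 * (x i t k - x j t k) *
            ((f (x i t) t k + c t * ∑ m, A i m * (g k (x m t k) - g k (x i t k)))
              - (f (x j t) t k + c t * ∑ m, A j m * (g k (x m t k) - g k (x j t k)))))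
          = ∑ i, ∑ j, ∑ k,
              (2 * ((x i t k - x j t k) * (f (x i t) t k - f (x j t) t k))
              + 2 * c t * ((x i t k - x j t k) *
                ((∑ m, A i m * (g k (x m t k) - g k (x i t k)))
                  - (∑ m, A j m * (g k (x m t k) - g k (x j t k)))))) from
          Finset.sum_congr rfl fun i _ => Finset.sum_congr rfl fun j _ =>
            Finset.sum_congr rfl fun k _ => by ring]
        simp only [Finset.sum_add_distrib, ← Finset.mul_sum]
      rw [hsplit, alg_sum' N n A hsym hrow (fun i k => x i t k) (fun i k => g k (x i t k))]
      simp only [hT_def]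
      ring
    have hFtle : Ft ≤ (M - ϖ) * Q t := by
      have inner : ∀ i j : Fin N, ∑ k, (x i t k - x j t k) * (f (x i t) t k - f (x j t) t k)
          ≤ (M - ϖ) * ∑ k, (x i t k - x j t k) ^ 2 := by
        intro i j
        have h1 := hQUAD (x i t) (x j t) t ht
        have h2 : ∑ k, δ k * (x i t k - x j t k) ^ 2
            ≤ M * ∑ k, (x i t k - x j t k) ^ 2 := by
          rw [Finset.mul_sum]
          exact Finset.sum_le_sum fun k _ =>
            mul_le_mul_of_nonneg_right (hMk k) (sq_nonneg _)
        have h4 : (M - ϖ) * ∑ k, (x i t k - x j t k) ^ 2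
            = M * ∑ k, (x i t k - x j t k) ^ 2 - ϖ * ∑ k, (x i t k - x j t k) ^ 2 := by
          ring
        linarith
      calc Ft ≤ ∑ i, ∑ j, (M - ϖ) * ∑ k, (x i t k - x j t k) ^ 2 :=
          Finset.sum_le_sum fun i _ => Finset.sum_le_sum fun j _ => inner i j
        _ = (M - ϖ) * Q t := by
          simp only [hQ_def, Finset.mul_sum]
    have hT := hTle t
    have hQRt := hQR t
    have h4N : (0:ℝ) ≤ 4 * (N:ℝ) * cstar := by positivity
    have h1 : 4 * (N:ℝ) * cstar * T t ≤ 4 * (N:ℝ) * cstar * (-(β/2) * R t) :=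
      mul_le_mul_of_nonneg_left hT h4N
    have h2 : 2 * M * Q t ≤ 2 * M * (C * R t) :=
      mul_le_mul_of_nonneg_left hQRt (by linarith)
    have e1 : Qd t + K * (2 * (c t - cstar) * (-(α / 2) * T t))
        = 2 * Ft + 4 * (N:ℝ) * cstar * T t := by
      rw [hQdeq]; linear_combination (cstar - c t) * T t * hKα
    have e2 : 4 * (N:ℝ) * cstar * (-(β/2) * R t) = -(2 * (C * M) * R t) := by
      rw [← hcs]; ring
    have e3 : 2 * M * (C * R t) = 2 * (C * M) * R t := by ring
    rw [e1]
    linarith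
  -- monotonicity of V and c
  have hVanti : AntitoneOn V (Set.Ici (0:ℝ)) := by
    apply antitoneOn_of_deriv_nonpos (convex_Ici 0)
    · intro t ht
      exact (hVd t ht).continuousAt.continuousWithinAt
    · rw [interior_Ici]
      intro t ht
      exact (hVd t (le_of_lt ht)).differentiableAt.differentiableWithinAt
    · rw [interior_Ici]
      intro t ht
      rw [(hVd t ht.le).deriv]
      have h1 := hVle t ht.le
      nlinarith [hQnn t]
  have hcd_nonneg : ∀ t : ℝ, 0 ≤ -(α/2) * T t := by
    intro t
    have h1 := hTle t
    have h2 := hRnn t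
    have h3 : 0 ≤ -T t := by nlinarith
    have h4 : -(α/2) * T t = (α/2) * (-T t) := by ring
    rw [h4]
    exact mul_nonneg (by linarith) h3
  have hcmono : MonotoneOn c (Set.Ici (0:ℝ)) := by
    apply monotoneOn_of_deriv_nonneg (convex_Ici 0)
    · intro t ht; exact (hcODE t ht).continuousAt.continuousWithinAt
    · rw [interior_Ici]; intro t ht
      exact (hcODE t ht.le).differentiableAt.differentiableWithinAt
    · rw [interior_Ici]; intro t ht
      rw [(hcODE t ht.le).deriv]
      have := hcd_nonneg t
      rw [hT_def] at this
      exact this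
  -- boundedness of c
  have hVle0 : ∀ t : ℝ, 0 ≤ t → V t ≤ V 0 := fun t ht =>
    hVanti Set.self_mem_Ici ht ht
  have hVt_eq : ∀ t : ℝ, V t = Q t + K * (c t - cstar) ^ 2 := fun t => by simp only [hV_def]
  have hcbound : ∀ t : ℝ, 0 ≤ t → c t ≤ cstar + Real.sqrt (V 0 / K) := by
    intro t ht
    have h1 : K * (c t - cstar) ^ 2 ≤ V 0 := by
      have := hVle0 t ht
      have := hQnn t
      have := hVt_eq t
      linarith
    have h2 : (c t - cstar) ^ 2 ≤ V 0 / K := by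
      rw [le_div_iff₀ hK]
      linarith
    have h3 : c t - cstar ≤ Real.sqrt (V 0 / K) := by
      calc c t - cstar ≤ |c t - cstar| := le_abs_self _
        _ = Real.sqrt ((c t - cstar) ^ 2) := (Real.sqrt_sq_eq_abs _).symm
        _ ≤ Real.sqrt (V 0 / K) := Real.sqrt_le_sqrt h2
    linarith
  -- convergence of c
  have hctil_mono : Monotone (fun t => c (max t 0)) := fun s t h =>
    hcmono (le_max_right s 0) (le_max_right t 0) (max_le_max h le_rfl)
  have hctil_bdd : BddAbove (Set.range fun t => c (max t 0)) := by
    refine ⟨cstar + Real.sqrt (V 0 / K), ?_⟩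
    rintro y ⟨t, rfl⟩
    exact hcbound _ (le_max_right t 0)
  have hceq : (fun t => c (max t 0)) =ᶠ[atTop] c := by
    filter_upwards [eventually_ge_atTop (0:ℝ)] with t ht
    rw [max_eq_left ht]
  have hclim : Tendsto c atTop (nhds (⨆ t : ℝ, c (max t 0))) :=
    (tendsto_atTop_ciSup hctil_mono hctil_bdd).congr' hceq
  set csup : ℝ := ⨆ t : ℝ, c (max t 0) with hcsup_def
  -- convergence of V
  have hVtil_anti : Antitone (fun t => V (max t 0)) := fun s t h =>
    hVanti (le_max_right s 0) (le_max_right t 0) (max_le_max h le_rfl)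
  have hVtil_bdd : BddBelow (Set.range fun t => V (max t 0)) :=
    ⟨0, by rintro y ⟨t, rfl⟩; exact hVnn _⟩
  have hVeq : (fun t => V (max t 0)) =ᶠ[atTop] V := by
    filter_upwards [eventually_ge_atTop (0:ℝ)] with t ht
    rw [max_eq_left ht]
  have hVlim : Tendsto V atTop (nhds (⨅ t : ℝ, V (max t 0))) :=
    (tendsto_atTop_ciInf hVtil_anti hVtil_bdd).congr' hVeq
  set Vinf : ℝ := ⨅ t : ℝ, V (max t 0) with hVinf_def
  set L : ℝ := Vinf - K * (csup - cstar) ^ 2 with hL_def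
  have hQlim : Tendsto Q atTop (nhds L) := by
    have h1 : Tendsto (fun t => V t - K * (c t - cstar) ^ 2) atTop (nhds L) := by
      rw [hL_def]
      exact hVlim.sub (((hclim.sub tendsto_const_nhds).pow 2).const_mul K)
    refine h1.congr fun t => ?_
    have := hVt_eq t
    linarith
  have hL0 : 0 ≤ L := ge_of_tendsto' hQlim hQnn
  have hLle : L ≤ 0 := by
    by_contra hLc
    push_neg at hLc
    have hev : ∀ᶠ t in atTop, L / 2 < Q t :=
      hQlim.eventually (eventually_gt_nhds (by linarith))
    obtain ⟨T₀, hT₀⟩ := eventually_atTop.mp hev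
    set T₁ : ℝ := max T₀ 0 with hT₁_def
    have hT₁0 : (0:ℝ) ≤ T₁ := le_max_right T₀ 0
    have hT₁get : ∀ t : ℝ, T₁ ≤ t → L / 2 < Q t := fun t htt =>
      hT₀ t (le_trans (le_max_left T₀ 0) htt)
    have hϖL : 0 < ϖ * L := mul_pos hϖ hLc
    set W : ℝ → ℝ := fun t => V t + ϖ * L * t with hW_def
    have hWd : ∀ t : ℝ, 0 ≤ t → HasDerivAt W
        (Qd t + K * (2 * (c t - cstar) * (-(α / 2) * T t)) + ϖ * L) t := by
      intro t ht
      have h1 := (hVd t ht).add ((hasDerivAt_id t).const_mul (ϖ * L))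
      simpa [hW_def, mul_comm, Pi.add_def] using h1
    have hWanti : AntitoneOn W (Set.Ici T₁) := by
      apply antitoneOn_of_deriv_nonpos (convex_Ici T₁)
      · intro t ht
        have ht0 : (0:ℝ) ≤ t := le_trans hT₁0 ht
        exact (hWd t ht0).continuousAt.continuousWithinAt
      · rw [interior_Ici]
        intro t ht
        have ht0 : (0:ℝ) ≤ t := le_trans hT₁0 (le_of_lt ht)
        exact (hWd t ht0).differentiableAt.differentiableWithinAt
      · rw [interior_Ici]
        intro t ht
        have ht0 : (0:ℝ) ≤ t := le_trans hT₁0 (le_of_lt ht)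
        rw [(hWd t ht0).deriv]
        have h1 := hVle t ht0
        have h2 := hT₁get t (le_of_lt ht)
        nlinarith
    set s : ℝ := (V T₁ + 1) / (ϖ * L) with hs_def
    have hs_nonneg : 0 ≤ s := div_nonneg (by linarith [hVnn T₁]) hϖL.le
    have hs_eq : ϖ * L * s = V T₁ + 1 := by
      rw [hs_def]
      field_simp
    have hWle : W (T₁ + s) ≤ W T₁ :=
      hWanti Set.self_mem_Ici (by simp [hs_nonneg] : T₁ + s ∈ Set.Ici T₁)
        (by linarith)
    rw [hW_def] at hWle
    have h2 := hVnn (T₁ + s)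
    have h3 : ϖ * L * (T₁ + s) = ϖ * L * T₁ + (V T₁ + 1) := by
      rw [mul_add, hs_eq]
    simp only at hWle
    linarith
  have hLzero : L = 0 := le_antisymm hLle hL0
  rw [hLzero] at hQlim
  constructor
  · intro i j
    have hb : ∀ t : ℝ, ‖x i t - x j t‖ ≤ Real.sqrt (Q t) := by
      intro t
      rw [pi_norm_le_iff_of_nonneg (Real.sqrt_nonneg _)]
      intro k
      have h1 : (x i t k - x j t k) ^ 2 ≤ ∑ k, (x i t k - x j t k) ^ 2 :=
        Finset.single_le_sum (f := fun k' => (x i t k' - x j t k') ^ 2)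
          (fun k' _ => sq_nonneg _) (Finset.mem_univ k)
      have h2 : ∑ k, (x i t k - x j t k) ^ 2 ≤ Q t := by
        simp only [hQ_def]
        calc ∑ k, (x i t k - x j t k) ^ 2
            ≤ ∑ j', ∑ k, (x i t k - x j' t k) ^ 2 :=
              Finset.single_le_sum (f := fun j' => ∑ k, (x i t k - x j' t k) ^ 2)
                (fun j' _ => Finset.sum_nonneg fun k _ => sq_nonneg _)
                (Finset.mem_univ j)
          _ ≤ ∑ i', ∑ j', ∑ k, (x i' t k - x j' t k) ^ 2 :=
              Finset.single_le_sum (f := fun i' => ∑ j', ∑ k, (x i' t k - x j' t k) ^ 2)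
                (fun i' _ => Finset.sum_nonneg fun j' _ =>
                  Finset.sum_nonneg fun k _ => sq_nonneg _)
                (Finset.mem_univ i)
      rw [Pi.sub_apply, Real.norm_eq_abs, ← Real.sqrt_sq_eq_abs]
      exact Real.sqrt_le_sqrt (le_trans h1 h2)
    have hsq : Tendsto (fun t => Real.sqrt (Q t)) atTop (nhds 0) := by
      have := (Real.continuous_sqrt.tendsto 0).comp hQlim
      simpa [Function.comp_def] using this
    exact tendsto_of_tendsto_of_tendsto_of_le_of_le tendsto_const_nhds hsq
      (fun t => norm_nonneg _) hb
  · exact ⟨csup, hclim⟩
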